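/- Let P ∈ ℝ[x₁,…,xₙ] be a nonzero polynomial whose total degree equals its degree in the variable xₙ, and let K ⊂ ℝⁿ be a compact set. Then there exists M_K > 0 such that for every M ≥ M_K the partial derivative with respect to xₙ of the function β_{P,M}(x) := xₙ(1 − x_{n−1}·P(x)²/M) is strictly positive on K ∩ {x_{n−1} ≤ 0}. -/

import Mathlib

open MvPolynomial


noncomputable def evalDeriv {m : ℕ} (x : Fin m → ℝ) (P : MvPolynomial (Fin m) ℝ) :
    (Fin m → ℝ) →L[ℝ] ℝ :=
  ∑ i, eval x (pderiv i P) • (ContinuousLinearMap.proj i : (Fin m → ℝ) →L[ℝ] ℝ)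

lemma evalDeriv_apply {m : ℕ} (x : Fin m → ℝ) (P : MvPolynomial (Fin m) ℝ)
    (v : Fin m → ℝ) : evalDeriv x P v = ∑ i, eval x (pderiv i P) * v i := by
  simp [evalDeriv]

lemma hasFDerivAt_eval {m : ℕ} (x : Fin m → ℝ) (P : MvPolynomial (Fin m) ℝ) :
    HasFDerivAt (fun y => eval y P) (evalDeriv x P) x := by
  induction P using MvPolynomial.induction_on with
  | C a =>
      have : evalDeriv x (C a : MvPolynomial (Fin m) ℝ) = 0 := by
        ext v; simp [evalDeriv_apply]
      rw [this]
      simpa using hasFDerivAt_const a x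
  | add p q hp hq =>
      have : evalDeriv x (p + q) = evalDeriv x p + evalDeriv x q := by
        ext v; simp [evalDeriv_apply, Finset.sum_add_distrib, add_mul]
      rw [this]
      have h' : HasFDerivAt (fun y : Fin m → ℝ => eval y p + eval y q) _ x := hp.add hq
      simpa [eval_add] using h'
  | mul_X p i hp =>
      have hX : HasFDerivAt (fun y : Fin m → ℝ => y i)
          (ContinuousLinearMap.proj i : (Fin m → ℝ) →L[ℝ] ℝ) x :=
        (ContinuousLinearMap.proj i : (Fin m → ℝ) →L[ℝ] ℝ).hasFDerivAt
      have h := hp.mul hX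
      have : evalDeriv x (p * X i)
          = eval x p • (ContinuousLinearMap.proj i : (Fin m → ℝ) →L[ℝ] ℝ)
            + x i • evalDeriv x p := by
        ext v
        simp only [ContinuousLinearMap.add_apply, ContinuousLinearMap.smul_apply,
          ContinuousLinearMap.proj_apply, evalDeriv_apply, smul_eq_mul, Finset.mul_sum]
        simp only [pderiv_mul, pderiv_X, map_add, map_mul, eval_X, add_mul,
          Finset.sum_add_distrib]
        rw [add_comm]
        congr 1
        · rw [Finset.sum_eq_single i]
          · simp
          · intro b _ hb
            simp [Pi.single_eq_of_ne (Ne.symm hb)]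
          · simp
        · exact Finset.sum_congr rfl fun j _ => by ring
      rw [this]
      have h' : HasFDerivAt (fun y : Fin m → ℝ => eval y p * y i) _ x := h
      simpa [eval_mul] using h'

/-- For β_{P,M}(x) := xₙ(1 − x_{n−1}P(x)²/M) and a compact K there is M_K > 0 such
that for M ≥ M_K the partial derivative ∂β/∂xₙ is strictly positive on
K ∩ {x_{n−1} ≤ 0}. Coordinates in ℝ^{n+2}: x_{n−1} is index n (penultimate), xₙ is the last. -/
theorem stmt_9 (n : ℕ) (P : MvPolynomial (Fin (n + 2)) ℝ) (hP : P ≠ 0)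
    (hdeg : P.totalDegree = P.degreeOf (Fin.last (n + 1)))
    (K : Set (Fin (n + 2) → ℝ)) (hK : IsCompact K) :
    ∃ MK > (0 : ℝ), ∀ M : ℝ, MK ≤ M → ∀ x ∈ K, x ⟨n, by omega⟩ ≤ 0 →
      0 < fderiv ℝ
        (fun y : Fin (n + 2) → ℝ =>
          y (Fin.last (n + 1)) * (1 - y ⟨n, by omega⟩ * (eval y P) ^ 2 / M))
        x (Pi.single (Fin.last (n + 1)) 1) := by
  set L : Fin (n + 2) := Fin.last (n + 1) with hLdef
  set n0 : Fin (n + 2) := ⟨n, by omega⟩ with hn0def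
  have hne : n0 ≠ L := by
    intro h
    have := congrArg Fin.val h
    simp only [hn0def, hLdef, Fin.last] at this
    omega
  set q : (Fin (n + 2) → ℝ) → ℝ :=
    fun x => x L * (x n0 * (2 * eval x P * eval x (pderiv L P))) with hqdef
  have hqc : ContinuousOn q K := by
    have h1 : Continuous fun x : Fin (n + 2) → ℝ => eval x P := by
      continuity
    have h2 : Continuous fun x : Fin (n + 2) → ℝ => eval x (pderiv L P) := by
      continuity
    exact Continuous.continuousOn (by fun_prop)
  obtain ⟨C, hC⟩ := hK.exists_bound_of_continuousOn hqc
  refine ⟨max 1 (2 * C), lt_of_lt_of_le one_pos (le_max_left _ _), ?_⟩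
  intro M hM x hx hxn0
  have hM1 : (1 : ℝ) ≤ M := le_trans (le_max_left _ _) hM
  have hM2 : 2 * C ≤ M := le_trans (le_max_right _ _) hM
  have hM0 : (0 : ℝ) < M := lt_of_lt_of_le one_pos hM1
  have hE := hasFDerivAt_eval x P
  have h2 : HasFDerivAt (fun y : Fin (n + 2) → ℝ => (eval y P) ^ 2)
      (eval x P • evalDeriv x P + eval x P • evalDeriv x P) x := by
    have h' : HasFDerivAt (fun y : Fin (n + 2) → ℝ => eval y P * eval y P) _ x := hE.mul hE
    simpa [pow_two] using h'
  have hn : HasFDerivAt (fun y : Fin (n + 2) → ℝ => y n0)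
      (ContinuousLinearMap.proj n0 : (Fin (n + 2) → ℝ) →L[ℝ] ℝ) x :=
    (ContinuousLinearMap.proj n0 : (Fin (n + 2) → ℝ) →L[ℝ] ℝ).hasFDerivAt
  have hL : HasFDerivAt (fun y : Fin (n + 2) → ℝ => y L)
      (ContinuousLinearMap.proj L : (Fin (n + 2) → ℝ) →L[ℝ] ℝ) x :=
    (ContinuousLinearMap.proj L : (Fin (n + 2) → ℝ) →L[ℝ] ℝ).hasFDerivAt
  have h4 : HasFDerivAt (fun y : Fin (n + 2) → ℝ => y n0 * (eval y P) ^ 2 / M)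
      (M⁻¹ • (x n0 • (eval x P • evalDeriv x P + eval x P • evalDeriv x P)
        + (eval x P) ^ 2 • ContinuousLinearMap.proj n0)) x := by
    simpa [div_eq_mul_inv] using (hn.mul h2).mul_const M⁻¹
  have h6 : HasFDerivAt (fun y : Fin (n + 2) → ℝ => y L * (1 - y n0 * (eval y P) ^ 2 / M)) _ x :=
    hL.mul (h4.const_sub 1)
  rw [h6.fderiv]
  simp only [ContinuousLinearMap.add_apply, ContinuousLinearMap.smul_apply,
    ContinuousLinearMap.proj_apply, ContinuousLinearMap.coe_sub', Pi.sub_apply,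
    ContinuousLinearMap.neg_apply, ContinuousLinearMap.coe_smul', Pi.smul_apply,
    evalDeriv_apply, smul_eq_mul, Pi.single_eq_same, Pi.single_eq_of_ne hne,
    ContinuousLinearMap.zero_apply]
  have hsum : ∑ i : Fin (n + 2), eval x (pderiv i P) * (Pi.single L 1 : Fin (n + 2) → ℝ) i
      = eval x (pderiv L P) := by
    rw [Finset.sum_eq_single L]
    · simp
    · intro b _ hb
      simp [Pi.single_eq_of_ne hb]
    · simp
  rw [hsum]
  have hq := hC x hx
  rw [Real.norm_eq_abs] at hq
  obtain ⟨hq2, hq1⟩ := abs_le.mp hq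
  have hMinv0 : (0 : ℝ) < M⁻¹ := inv_pos.mpr hM0
  have f1 : 0 ≤ (C - q x) * M⁻¹ := mul_nonneg (by linarith) hMinv0.le
  have f2 : 0 ≤ (-(x n0)) * (eval x P) ^ 2 * M⁻¹ :=
    mul_nonneg (mul_nonneg (by linarith) (sq_nonneg _)) hMinv0.le
  have f3 : C * M⁻¹ ≤ 1 / 2 := by
    have h := mul_le_mul_of_nonneg_right (show C ≤ M / 2 by linarith) hMinv0.le
    have h2 : M / 2 * M⁻¹ = 1 / 2 := by field_simp
    linarith [h, h2.le]
  have hqx : q x = x L * (x n0 * (2 * eval x P * eval x (pderiv L P))) := rfl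
  rw [div_eq_mul_inv]
  nlinarith [f1, f2, f3, hqx]
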